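/- Let f : ℂ → ℂ be a non-constant entire function (differentiable on all of ℂ), and let A ⊆ ℂ be a set such that A ∪ {∞} is connected in the one-point compactification ℂ ∪ {∞}. Then f⁻¹(A) ∪ {∞} is connected in ℂ ∪ {∞}. -/

import Mathlib

open Set Filter Topology OnePoint

/-- Separated sets in a metric space can be separated by open sets. -/
lemma aux_sep {T T' : Set ℂ} (h1 : closure T ∩ T' = ∅) (h2 : T ∩ closure T' = ∅) :
    ∃ U V : Set ℂ, IsOpen U ∧ IsOpen V ∧ T ⊆ U ∧ T' ⊆ V ∧ U ∩ V = ∅ := by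
  rcases T.eq_empty_or_nonempty with rfl | hT
  · exact ⟨∅, univ, isOpen_empty, isOpen_univ, by simp, by simp, by simp⟩
  rcases T'.eq_empty_or_nonempty with rfl | hT'
  · exact ⟨univ, ∅, isOpen_univ, isOpen_empty, by simp, by simp, by simp⟩
  refine ⟨{x | Metric.infDist x T < Metric.infDist x T'},
    {x | Metric.infDist x T' < Metric.infDist x T},
    isOpen_lt (Metric.continuous_infDist_pt T) (Metric.continuous_infDist_pt T'),
    isOpen_lt (Metric.continuous_infDist_pt T') (Metric.continuous_infDist_pt T), ?_, ?_, ?_⟩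
  · intro t ht
    have h0 : Metric.infDist t T = 0 := Metric.infDist_zero_of_mem ht
    have hpos : Metric.infDist t T' ≠ 0 := by
      intro h
      have : t ∈ closure T' := (Metric.mem_closure_iff_infDist_zero hT').mpr h
      have : t ∈ T ∩ closure T' := ⟨ht, this⟩
      rw [h2] at this; exact this
    have := Metric.infDist_nonneg (s := T') (x := t)
    simpa [h0] using lt_of_le_of_ne this (Ne.symm hpos)
  · intro t ht
    have h0 : Metric.infDist t T' = 0 := Metric.infDist_zero_of_mem ht
    have hpos : Metric.infDist t T ≠ 0 := by
      intro h
      have : t ∈ closure T := (Metric.mem_closure_iff_infDist_zero hT).mpr h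
      have : t ∈ closure T ∩ T' := ⟨this, ht⟩
      rw [h1] at this; exact this
    have := Metric.infDist_nonneg (s := T) (x := t)
    simpa [h0] using lt_of_le_of_ne this (Ne.symm hpos)
  · ext x
    simp only [mem_inter_iff, mem_setOf_eq, mem_empty_iff_false, iff_false, not_and]
    exact fun h => not_lt.mpr h.le

/-- The asymmetric key step: if `u` contains `∞` and `v` does not, the separation leads
through the open mapping theorem to a separation of `A ∪ {∞}`. -/
lemma aux_key (f : ℂ → ℂ) (hop : IsOpenMap f) (hcont : Continuous f) (A : Set ℂ)
    (hA : IsPreconnected (insert (∞ : OnePoint ℂ) ((fun z : ℂ => (z : OnePoint ℂ)) '' A)))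
    (u v : Set (OnePoint ℂ)) (hu : IsOpen u) (hv : IsOpen v)
    (hcov : insert (∞ : OnePoint ℂ) ((fun z : ℂ => (z : OnePoint ℂ)) '' (f ⁻¹' A)) ⊆ u ∪ v)
    (hiu : ∞ ∈ u) (hiv : ∞ ∉ v)
    (hne : (insert (∞ : OnePoint ℂ) ((fun z : ℂ => (z : OnePoint ℂ)) '' (f ⁻¹' A)) ∩ v).Nonempty) :
    (insert (∞ : OnePoint ℂ) ((fun z : ℂ => (z : OnePoint ℂ)) '' (f ⁻¹' A)) ∩ (u ∩ v)).Nonempty := by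
  by_contra hC
  rw [not_nonempty_iff_eq_empty] at hC
  set S : Set ℂ := f ⁻¹' A with hS
  set u₀ : Set ℂ := (OnePoint.some) ⁻¹' u with hu₀def
  set v₀ : Set ℂ := (OnePoint.some) ⁻¹' v with hv₀def
  have hu₀ : IsOpen u₀ := hu.preimage OnePoint.continuous_coe
  have hv₀ : IsOpen v₀ := hv.preimage OnePoint.continuous_coe
  have hKc : IsCompact u₀ᶜ := ((OnePoint.isOpen_iff_of_mem' hiu).mp hu).1
  have hScov : S ⊆ u₀ ∪ v₀ := by
    intro z hz
    have : (z : OnePoint ℂ) ∈ u ∪ v := hcov (mem_insert_of_mem _ ⟨z, hz, rfl⟩)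
    exact this
  have hdisj : S ∩ u₀ ∩ v₀ = ∅ := by
    ext z
    simp only [mem_inter_iff, mem_empty_iff_false, iff_false, not_and]
    intro hz hzv
    have : (z : OnePoint ℂ) ∈ insert (∞ : OnePoint ℂ)
        ((fun z : ℂ => (z : OnePoint ℂ)) '' S) ∩ (u ∩ v) :=
      ⟨mem_insert_of_mem _ ⟨z, hz.1, rfl⟩, hz.2, hzv⟩
    rw [hC] at this; exact this
  -- T = S ∩ v₀ is a nonempty bounded piece
  set T : Set ℂ := S ∩ v₀ with hTdef
  have hTne : T.Nonempty := by
    obtain ⟨x, hx1, hx2⟩ := hne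
    rcases hx1 with rfl | ⟨z, hz, rfl⟩
    · exact absurd hx2 hiv
    · exact ⟨z, hz, hx2⟩
  have hTu₀ : T ∩ u₀ = ∅ := by
    ext z
    simp only [mem_inter_iff, mem_empty_iff_false, iff_false, not_and]
    intro ⟨hzS, hzv⟩ hzu
    have : z ∈ S ∩ u₀ ∩ v₀ := ⟨⟨hzS, hzu⟩, hzv⟩
    rw [hdisj] at this; exact this
  have hTbdd : Bornology.IsBounded T := by
    refine hKc.isBounded.subset fun z hz => ?_
    intro hzu
    have : z ∈ T ∩ u₀ := ⟨hz, hzu⟩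
    rw [hTu₀] at this; exact this
  -- T and S \ T are separated
  set T' : Set ℂ := S \ T with hT'def
  have hT'u₀ : T' ⊆ u₀ := by
    intro z ⟨hzS, hzT⟩
    rcases hScov hzS with h | h
    · exact h
    · exact absurd ⟨hzS, h⟩ hzT
  have hsep1 : closure T ∩ T' = ∅ := by
    by_contra h
    obtain ⟨z, hz1, hz2⟩ := nonempty_iff_ne_empty.mpr h
    have hzu : z ∈ u₀ := hT'u₀ hz2
    obtain ⟨w, hw, hwu⟩ := mem_closure_iff.mp hz1 u₀ hu₀ hzu
    have : w ∈ T ∩ u₀ := ⟨hwu, hw⟩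
    rw [hTu₀] at this; exact this
  have hsep2 : T ∩ closure T' = ∅ := by
    by_contra h
    obtain ⟨z, hz1, hz2⟩ := nonempty_iff_ne_empty.mpr h
    have hzv : z ∈ v₀ := hz1.2
    obtain ⟨w, hwv, hwT'⟩ := mem_closure_iff.mp hz2 v₀ hv₀ hzv
    exact hwT'.2 ⟨hwT'.1, hwv⟩
  obtain ⟨U', V', hU'o, hV'o, hTU', hT'V', hUV'⟩ := aux_sep hsep1 hsep2
  obtain ⟨R, hR⟩ := hTbdd.subset_ball 0
  set U : Set ℂ := U' ∩ Metric.ball 0 R with hUdef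
  have hUo : IsOpen U := hU'o.inter Metric.isOpen_ball
  have hTU : T ⊆ U := fun z hz => ⟨hTU' hz, hR hz⟩
  have hUcc : IsCompact (closure U) := by
    refine (Metric.isBounded_ball.subset (inter_subset_right)).isCompact_closure
  -- closure U ∩ S ⊆ T
  have hclS : closure U ∩ S ⊆ T := by
    rintro z ⟨hzc, hzS⟩
    by_contra hzT
    have hzT' : z ∈ T' := ⟨hzS, hzT⟩
    have hzV' : z ∈ V' := hT'V' hzT'
    obtain ⟨w, hw, hwU⟩ := mem_closure_iff.mp hzc V' hV'o hzV'
    have : w ∈ U' ∩ V' := ⟨hwU.1, hw⟩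
    rw [hUV'] at this; exact this
  set W : Set ℂ := f '' U with hWdef
  have hWo : IsOpen W := hop U hUo
  set Cs : Set ℂ := f '' (closure U) with hCdef
  have hCc : IsCompact Cs := hUcc.image hcont
  set G : Set ℂ := Csᶜ with hGdef
  have hGo : IsOpen G := hCc.isClosed.isOpen_compl
  have hAWG : A ⊆ W ∪ G := by
    intro a ha
    by_cases haC : a ∈ Cs
    · obtain ⟨z, hz, rfl⟩ := haC
      have hzS : z ∈ S := ha
      exact Or.inl ⟨z, hTU (hclS ⟨hz, hzS⟩), rfl⟩
    · exact Or.inr haC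
  have hWG : W ∩ G = ∅ := by
    ext a
    simp only [mem_inter_iff, mem_empty_iff_false, iff_false, not_and]
    intro haW haG
    exact haG (image_mono (f := f) subset_closure haW)
  obtain ⟨t, htT⟩ := hTne
  have htW : f t ∈ A ∩ W := ⟨htT.1, ⟨t, hTU htT, rfl⟩⟩
  -- apply preconnectedness of A ∪ {∞}
  set u' : Set (OnePoint ℂ) := insert ∞ ((fun z : ℂ => (z : OnePoint ℂ)) '' G) with hu'def
  set v' : Set (OnePoint ℂ) := (fun z : ℂ => (z : OnePoint ℂ)) '' W with hv'def
  have hpre : (OnePoint.some : ℂ → OnePoint ℂ) ⁻¹' u' = G := by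
    ext z
    simp [hu'def, OnePoint.coe_eq_coe]
  have hu'o : IsOpen u' := by
    rw [OnePoint.isOpen_iff_of_mem' (mem_insert _ _), hpre]
    exact ⟨by rw [hGdef, compl_compl]; exact hCc, hGo⟩
  have hv'o : IsOpen v' := OnePoint.isOpen_image_coe.mpr hWo
  have hcov' : insert (∞ : OnePoint ℂ) ((fun z : ℂ => (z : OnePoint ℂ)) '' A) ⊆ u' ∪ v' := by
    rintro x (rfl | ⟨a, ha, rfl⟩)
    · exact Or.inl (mem_insert _ _)
    · rcases hAWG ha with h | h
      · exact Or.inr ⟨a, h, rfl⟩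
      · exact Or.inl (mem_insert_of_mem _ ⟨a, h, rfl⟩)
  have h1 : (insert (∞ : OnePoint ℂ) ((fun z : ℂ => (z : OnePoint ℂ)) '' A) ∩ u').Nonempty :=
    ⟨∞, mem_insert _ _, mem_insert _ _⟩
  have h2 : (insert (∞ : OnePoint ℂ) ((fun z : ℂ => (z : OnePoint ℂ)) '' A) ∩ v').Nonempty :=
    ⟨(f t : OnePoint ℂ), mem_insert_of_mem _ ⟨f t, htW.1, rfl⟩, ⟨f t, htW.2, rfl⟩⟩
  obtain ⟨x, _, hxu', hxv'⟩ := hA u' v' hu'o hv'o hcov' h1 h2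
  obtain ⟨a, haW, hax⟩ := hxv'
  subst hax
  rcases hxu' with h | ⟨b, hbG, hb⟩
  · exact OnePoint.coe_ne_infty a h
  · rw [OnePoint.coe_eq_coe] at hb
    rw [hb] at hbG
    have : a ∈ W ∩ G := ⟨haW, hbG⟩
    rw [hWG] at this; exact this

/-- **Pullbacks of sets connected to infinity are connected to infinity.** If `f` is a
non-constant entire function and `A ∪ {∞}` is connected in the one-point compactification
of `ℂ`, then `f⁻¹(A) ∪ {∞}` is connected as well. -/
theorem preimage_union_infty_connected (f : ℂ → ℂ) (hf : Differentiable ℂ f)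
    (hnc : ¬ ∃ c : ℂ, f = Function.const ℂ c) (A : Set ℂ)
    (hA : IsConnected (insert (∞ : OnePoint ℂ) ((fun z : ℂ => (z : OnePoint ℂ)) '' A))) :
    IsConnected (insert (∞ : OnePoint ℂ) ((fun z : ℂ => (z : OnePoint ℂ)) '' (f ⁻¹' A))) := by
  have hop : IsOpenMap f := by
    have han : AnalyticOnNhd ℂ f univ := fun z _ => hf.analyticAt z
    rcases han.is_constant_or_isOpen isPreconnected_univ with ⟨w, hw⟩ | hopen
    · exact absurd ⟨w, funext fun z => hw z (mem_univ z)⟩ hnc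
    · exact fun s hs => hopen s (subset_univ s) hs
  refine ⟨⟨∞, mem_insert _ _⟩, ?_⟩
  intro u v hu hv hcov hune hvne
  by_cases hiu : ∞ ∈ u <;> by_cases hiv : ∞ ∈ v
  · exact ⟨∞, mem_insert _ _, hiu, hiv⟩
  · exact aux_key f hop hf.continuous A hA.isPreconnected u v hu hv hcov hiu hiv hvne
  · rw [inter_comm u v]
    exact aux_key f hop hf.continuous A hA.isPreconnected v u hv hu
      (by rwa [union_comm]) hiv hiu hune
  · rcases hcov (mem_insert _ _) with h | h
    · exact absurd h hiu
    · exact absurd h hiv
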